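/- Let G be a finite simple graph without isolated vertices and let k be a positive integer. Then G is a total k-uniform chordal graph if and only if G is the disjoint union of k/2 complete multipartite graphs, each having at least two parts and at most one part of size greater than 1. -/

import Mathlib

open SimpleGraph

/-- `A ⊆ V(G)` is a total dominating set of `G`: every vertex has a neighbor in `A`. -/
def TotalDomSet {V : Type*} (G : SimpleGraph V) (A : Set V) : Prop :=
  ∀ v : V, ∃ a ∈ A, G.Adj v a

/-- `s` is a legal (open neighborhood) sequence of `G`: the vertices are distinct and every
vertex after the first has a neighbor adjacent to no vertex preceding it in the sequence. -/
def LegalSeq {V : Type*} (G : SimpleGraph V) (s : List V) : Prop :=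
  s.Nodup ∧ ∀ (i : ℕ) (h : i < s.length), 0 < i →
    ∃ w : V, G.Adj (s.get ⟨i, h⟩) w ∧ ∀ u ∈ s.take i, ¬ G.Adj u w

/-- `s` is a total dominating sequence of `G`: a legal sequence whose underlying set is a
total dominating set. -/
def TotalDomSeq {V : Type*} (G : SimpleGraph V) (s : List V) : Prop :=
  LegalSeq G s ∧ TotalDomSet G {v | v ∈ s}

/-- The total domination number `γ_t(G)`: the minimum size of a total dominating set. -/
noncomputable def totalDomNum {V : Type*} (G : SimpleGraph V) : ℕ :=
  sInf {n | ∃ A : Set V, TotalDomSet G A ∧ A.ncard = n}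

/-- The Grundy total domination number `γ_gr^t(G)`: the maximum length of a total dominating
sequence. -/
noncomputable def grundyTotalDomNum {V : Type*} (G : SimpleGraph V) : ℕ :=
  sSup {n | ∃ s : List V, TotalDomSeq G s ∧ s.length = n}

/-- `G` is total `k`-uniform if `γ_t(G) = γ_gr^t(G) = k`. -/
def TotalKUniform {V : Type*} (G : SimpleGraph V) (k : ℕ) : Prop :=
  totalDomNum G = k ∧ grundyTotalDomNum G = k

/-- `G` has no isolated vertices. -/
def NoIsolatedVerts {V : Type*} (G : SimpleGraph V) : Prop :=
  ∀ v : V, ∃ w : V, G.Adj v w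

/-- The closed neighborhood `N[v] = N(v) ∪ {v}`. -/
def closedNbhd {V : Type*} (G : SimpleGraph V) (v : V) : Set V :=
  insert v (G.neighborSet v)

/-- `G` is false twin-free: no two distinct vertices have the same (open) neighborhood. -/
def FalseTwinFree {V : Type*} (G : SimpleGraph V) : Prop :=
  ∀ u v : V, u ≠ v → G.neighborSet u ≠ G.neighborSet v

/-- `G` is chordal: it contains no induced cycle of length greater than 3. -/
def IsChordal {V : Type*} (G : SimpleGraph V) : Prop :=
  ∀ (n : ℕ), 4 ≤ n → ∀ S : Set V, ¬ Nonempty (G.induce S ≃g SimpleGraph.cycleGraph n)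

/-- `G` is the disjoint union of `m` complete multipartite graphs, each having at least two
parts and at most one part of size greater than 1. Here `f` assigns to each vertex the index
of the component containing it, `c` assigns to each vertex its part within its component, two
vertices are adjacent iff they lie in the same component but in different parts, every
component has at least two parts, and in every component at most one part has more than one
vertex. -/
def DisjUnionCompMultipartiteOneBig {V : Type*} (G : SimpleGraph V) (m : ℕ) : Prop :=
  ∃ (f : V → Fin m) (c : V → ℕ),
    (∀ u v : V, G.Adj u v ↔ (f u = f v ∧ c u ≠ c v)) ∧
    (∀ i : Fin m, ∃ u v : V, f u = i ∧ f v = i ∧ c u ≠ c v) ∧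
    (∀ i : Fin m, ∀ j₁ j₂ : ℕ, 1 < {x : V | f x = i ∧ c x = j₁}.ncard →
      1 < {x : V | f x = i ∧ c x = j₂}.ncard → j₁ = j₂)

set_option linter.unusedSectionVars false
set_option linter.unusedVariables false
set_option maxHeartbeats 1000000

/-! ### Auxiliary machinery -/

section Aux

variable {V : Type*} {G : SimpleGraph V} {k : ℕ}

/-- The set of vertices covered (dominated) by the vertices of a list. -/
def cov {V : Type*} (G : SimpleGraph V) (s : List V) : Set V := {w | ∃ u ∈ s, G.Adj u w}

lemma cov_append {s t : List V} : cov G (s ++ t) = cov G s ∪ cov G t := by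
  ext w; simp [cov, List.mem_append, or_and_right, exists_or]

lemma mem_cov {w : V} {s : List V} : w ∈ cov G s ↔ ∃ u ∈ s, G.Adj u w := Iff.rfl

lemma legal_nil : LegalSeq G ([] : List V) := ⟨List.nodup_nil, by intro i h; simp at h⟩

lemma legal_singleton (x : V) : LegalSeq G [x] := by
  refine ⟨List.nodup_singleton x, ?_⟩
  intro i h hi; simp at h; omega
lemma legal_append_one {s : List V} {x : V} :
    LegalSeq G (s ++ [x]) ↔ LegalSeq G s ∧ x ∉ s ∧ (s = [] ∨ ∃ w, G.Adj x w ∧ w ∉ cov G s) := by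
  constructor
  · rintro ⟨hnd, hw⟩
    rw [List.nodup_append] at hnd
    obtain ⟨hnd1, -, hdisj⟩ := hnd
    have hxs : x ∉ s := fun hx => hdisj x hx x (by simp) rfl
    refine ⟨⟨hnd1, ?_⟩, hxs, ?_⟩
    · intro i h hi
      have h' : i < (s ++ [x]).length := by simp; omega
      obtain ⟨w, hw1, hw2⟩ := hw i h' hi
      refine ⟨w, ?_, ?_⟩
      · rw [List.get_eq_getElem] at hw1 ⊢
        rwa [List.getElem_append_left h] at hw1
      · intro u hu
        exact hw2 u (by rwa [List.take_append_of_le_length h.le])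
    · rcases eq_or_ne s [] with hse | hse
      · exact Or.inl hse
      · right
        have hlen : 0 < s.length := List.length_pos_iff.2 hse
        have h' : s.length < (s ++ [x]).length := by simp
        obtain ⟨w, hw1, hw2⟩ := hw s.length h' hlen
        refine ⟨w, ?_, ?_⟩
        · rw [List.get_eq_getElem, List.getElem_append_right le_rfl] at hw1
          simpa using hw1
        · rintro ⟨u, hu, hadj⟩
          refine hw2 u ?_ hadj
          rw [List.take_append_of_le_length le_rfl, List.take_length]
          exact hu
  · rintro ⟨⟨hnd, hw⟩, hx, hwit⟩
    constructor
    · rw [List.nodup_append]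
      refine ⟨hnd, List.nodup_singleton x, fun a ha hax => ?_⟩
      intro hb hab; rw [List.mem_singleton] at hb
      exact hx (by rw [← hb, ← hab]; exact ha)
    · intro i h hi
      rcases lt_or_ge i s.length with h' | h'
      · obtain ⟨w, h1, h2⟩ := hw i h' hi
        refine ⟨w, ?_, ?_⟩
        · rw [List.get_eq_getElem] at h1 ⊢
          rwa [List.getElem_append_left h']
        · intro u hu
          exact h2 u (by rwa [List.take_append_of_le_length h'.le] at hu)
      · have hie : i = s.length := by simp at h; omega
        subst hie
        rcases hwit with rfl | ⟨w, hw1, hw2⟩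
        · simp at hi
        · refine ⟨w, ?_, ?_⟩
          · rw [List.get_eq_getElem, List.getElem_append_right le_rfl]
            simpa using hw1
          · intro u hu hadj
            rw [List.take_append_of_le_length le_rfl, List.take_length] at hu
            exact hw2 ⟨u, hu, hadj⟩

lemma LegalSeq.of_append {s t : List V} (h : LegalSeq G (s ++ t)) : LegalSeq G s := by
  obtain ⟨hnd, hw⟩ := h
  refine ⟨hnd.sublist (List.sublist_append_left s t), ?_⟩
  intro i hi h0
  have h' : i < (s ++ t).length := by simp; omega
  obtain ⟨w, h1, h2⟩ := hw i h' h0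
  refine ⟨w, ?_, fun u hu => h2 u ?_⟩
  · rw [List.get_eq_getElem] at h1 ⊢
    rwa [List.getElem_append_left hi] at h1
  · rwa [List.take_append_of_le_length hi.le]

lemma legal_transfer {s s' : List V} (t : List V)
    (hs : LegalSeq G s) (hmem : ∀ y ∈ s, y ∈ s') (hcov : cov G s = cov G s')
    (ht : LegalSeq G (s' ++ t)) :
    LegalSeq G (s ++ t) ∧ cov G (s ++ t) = cov G (s' ++ t) := by
  induction t generalizing s s' with
  | nil => simpa using ⟨hs, hcov⟩
  | cons y t' ih =>
    have hre : s' ++ y :: t' = (s' ++ [y]) ++ t' := by simp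
    rw [hre] at ht
    have hpre : LegalSeq G (s' ++ [y]) := ht.of_append
    obtain ⟨hs'', hys', hwit⟩ := legal_append_one.mp hpre
    have hys : y ∉ s := fun h => hys' (hmem y h)
    have hsy : LegalSeq G (s ++ [y]) := by
      refine legal_append_one.mpr ⟨hs, hys, ?_⟩
      rcases hwit with hnil | ⟨w, hw1, hw2⟩
      · left
        subst hnil
        exact List.eq_nil_iff_forall_not_mem.mpr fun a ha => by simpa using hmem a ha
      · exact Or.inr ⟨w, hw1, fun hw => hw2 (hcov ▸ hw)⟩
    have hcov' : cov G (s ++ [y]) = cov G (s' ++ [y]) := by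
      rw [cov_append, cov_append, hcov]
    have hmem' : ∀ z ∈ s ++ [y], z ∈ s' ++ [y] := by
      intro z hz
      rcases List.mem_append.mp hz with h | h
      · exact List.mem_append.mpr (Or.inl (hmem z h))
      · exact List.mem_append.mpr (Or.inr h)
    obtain ⟨h1, h2⟩ := ih hsy hmem' hcov' ht
    constructor
    · rwa [List.append_assoc, List.singleton_append] at h1
    · rw [hre]
      rwa [List.append_assoc, List.singleton_append] at h2

section Fin
variable [Finite V]

lemma legal_length_le {s : List V} (hs : LegalSeq G s) : s.length ≤ Nat.card V := by
  have := Fintype.ofFinite V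
  rw [Nat.card_eq_fintype_card]
  exact hs.1.length_le_card

lemma exists_maximal_ext {s : List V} (hs : LegalSeq G s) :
    ∃ t, LegalSeq G (s ++ t) ∧
      ∀ x, x ∉ s ++ t → ∀ w, G.Adj x w → w ∈ cov G (s ++ t) := by
  have aux : ∀ (n : ℕ) (s : List V), LegalSeq G s → Nat.card V ≤ s.length + n →
      ∃ t, LegalSeq G (s ++ t) ∧
        ∀ x, x ∉ s ++ t → ∀ w, G.Adj x w → w ∈ cov G (s ++ t) := by
    intro n
    induction n with
    | zero =>
      intro s hs hlen
      refine ⟨[], by simpa using hs, ?_⟩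
      intro x hx w hadj
      by_contra hw
      have : LegalSeq G (s ++ [x]) := by
        refine legal_append_one.mpr ⟨hs, by simpa using hx, Or.inr ⟨w, hadj, by simpa using hw⟩⟩
      have := legal_length_le this
      simp at this
      omega
    | succ n ih =>
      intro s hs hlen
      by_cases hex : ∃ x, x ∉ s ∧ ∃ w, G.Adj x w ∧ w ∉ cov G s
      · obtain ⟨x, hx, w, hadj, hw⟩ := hex
        have hsx : LegalSeq G (s ++ [x]) := legal_append_one.mpr ⟨hs, hx, Or.inr ⟨w, hadj, hw⟩⟩
        obtain ⟨t, ht1, ht2⟩ := ih (s ++ [x]) hsx (by simp; omega)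
        refine ⟨x :: t, ?_, ?_⟩
        · rwa [List.append_assoc, List.singleton_append] at ht1
        · intro z hz ww hadjw
          rw [← List.singleton_append, ← List.append_assoc]
          exact ht2 z (by simpa [List.mem_append] using hz) ww hadjw
      · push_neg at hex
        refine ⟨[], by simpa using hs, ?_⟩
        intro x hx w hadj
        simp only [List.append_nil] at hx ⊢
        exact hex x hx w hadj
  exact aux (Nat.card V) s hs (by omega)
end Fin
section Uniform
variable [Finite V]

lemma max_cov_univ (hiso : NoIsolatedVerts G) {s : List V}
    (hmax : ∀ x, x ∉ s → ∀ w, G.Adj x w → w ∈ cov G s) : ∀ v : V, v ∈ cov G s := by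
  intro v
  by_contra hv
  obtain ⟨w, hw⟩ := hiso v
  by_cases hws : w ∈ s
  · exact hv (mem_cov.mpr ⟨w, hws, hw.symm⟩)
  · exact hv (hmax w hws v hw.symm)

lemma ncard_mem_list {s : List V} (h : s.Nodup) : {v | v ∈ s}.ncard = s.length := by
  classical
  have he : {v | v ∈ s} = ↑s.toFinset := by ext v; simp
  rw [he, Set.ncard_coe_finset, List.toFinset_card_of_nodup h]

lemma maximal_length (huni : TotalKUniform G k) (hiso : NoIsolatedVerts G)
    {s : List V} (hs : LegalSeq G s)
    (hmax : ∀ x, x ∉ s → ∀ w, G.Adj x w → w ∈ cov G s) : s.length = k := by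
  have hcovu := max_cov_univ hiso hmax
  have htds : TotalDomSeq G s := by
    refine ⟨hs, fun v => ?_⟩
    obtain ⟨u, hu, hadj⟩ := mem_cov.mp (hcovu v)
    exact ⟨u, hu, hadj.symm⟩
  have hle : s.length ≤ k := by
    rw [← huni.2]
    apply le_csSup
    · exact ⟨Nat.card V, fun n hn => by obtain ⟨s', hs', rfl⟩ := hn; exact legal_length_le hs'.1⟩
    · exact ⟨s, htds, rfl⟩
  have hge : k ≤ s.length := by
    rw [← huni.1]
    exact Nat.sInf_le ⟨{v | v ∈ s}, htds.2, ncard_mem_list hs.1⟩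
  omega

lemma cov_eq_length_eq (huni : TotalKUniform G k) (hiso : NoIsolatedVerts G)
    {s s' : List V} (hs : LegalSeq G s) (hs' : LegalSeq G s')
    (hmem : ∀ y ∈ s, y ∈ s') (hcov : cov G s = cov G s') : s.length = s'.length := by
  obtain ⟨t, ht1, ht2⟩ := exists_maximal_ext hs'
  obtain ⟨h1, h2⟩ := legal_transfer t hs hmem hcov ht1
  have hcu := max_cov_univ hiso ht2
  have l1 := maximal_length huni hiso ht1 ht2
  have l2 := maximal_length huni hiso h1 (fun x _ w _ => by rw [h2]; exact hcu w)
  simp only [List.length_append] at l1 l2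
  omega

lemma no_strict (huni : TotalKUniform G k) (hiso : NoIsolatedVerts G) {u v : V} (huv : u ≠ v)
    (hsub : ∀ w, G.Adj u w → G.Adj v w) : ∀ w, G.Adj v w → G.Adj u w := by
  by_contra hcon
  push_neg at hcon
  obtain ⟨w₀, hw1, hw2⟩ := hcon
  have hlegal2 : LegalSeq G ([u] ++ [v]) := by
    refine legal_append_one.mpr ⟨legal_singleton u, by simpa using huv.symm, Or.inr ⟨w₀, hw1, ?_⟩⟩
    rw [mem_cov]
    rintro ⟨z, hz, hadj⟩
    simp only [List.mem_singleton] at hz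
    exact hw2 (hz ▸ hadj)
  have hcov : cov G [v] = cov G ([u] ++ [v]) := by
    ext z
    simp only [mem_cov, List.mem_append, List.mem_singleton]
    constructor
    · rintro ⟨a, rfl, h⟩; exact ⟨a, Or.inr rfl, h⟩
    · rintro ⟨a, ha, h⟩
      rcases ha with rfl | rfl
      · exact ⟨v, rfl, hsub z h⟩
      · exact ⟨a, rfl, h⟩
  have := cov_eq_length_eq huni hiso (legal_singleton v) hlegal2
    (by intro y hy; simp at hy; simp [hy]) hcov
  simp at this

lemma dom_propagate (huni : TotalKUniform G k) (hiso : NoIsolatedVerts G) {u v : V}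
    (hadj : G.Adj u v) (hdome : ∀ w, G.Adj v w → w = u ∨ G.Adj u w) :
    ∀ x, G.Adj u x → ∀ w, G.Adj x w → w = u ∨ G.Adj u w := by
  intro x hux
  by_cases hxv : x = v
  · subst hxv; exact hdome
  intro w hxw
  by_contra hcon
  push_neg at hcon
  obtain ⟨hwu, hnadj⟩ := hcon
  have hnuw : ¬ G.Adj u w := hnadj
  have hnvw : ¬ G.Adj v w := fun h => by
    rcases hdome w h with h' | h'
    · exact hwu h'
    · exact hnuw h'
  have hlegal1 : LegalSeq G ([u] ++ [x]) := by
    refine legal_append_one.mpr ⟨legal_singleton u, by simpa using hux.ne', Or.inr ⟨w, hxw, ?_⟩⟩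
    rw [mem_cov]; rintro ⟨z, hz, hz2⟩
    simp only [List.mem_singleton] at hz
    exact hnuw (hz ▸ hz2)
  have hlegal2 : LegalSeq G (([u] ++ [v]) ++ [x]) := by
    refine legal_append_one.mpr ⟨?_, ?_, Or.inr ⟨w, hxw, ?_⟩⟩
    · refine legal_append_one.mpr ⟨legal_singleton u, by simpa using hadj.ne', Or.inr ⟨u, hadj.symm, ?_⟩⟩
      rw [mem_cov]; rintro ⟨z, hz, hz2⟩
      simp only [List.mem_singleton] at hz
      exact G.irrefl (hz ▸ hz2)
    · simp only [List.mem_append, List.mem_singleton]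
      rintro (rfl | rfl)
      · exact G.irrefl hux
      · exact hxv rfl
    · rw [mem_cov]; rintro ⟨z, hz, hz2⟩
      simp only [List.mem_append, List.mem_singleton] at hz
      rcases hz with rfl | rfl
      · exact hnuw hz2
      · exact hnvw hz2
  have hcov : cov G ([u] ++ [x]) = cov G (([u] ++ [v]) ++ [x]) := by
    ext z
    simp only [mem_cov, List.mem_append, List.mem_singleton]
    constructor
    · rintro ⟨a, ha, h⟩
      rcases ha with rfl | rfl
      · exact ⟨a, Or.inl (Or.inl rfl), h⟩
      · exact ⟨a, Or.inr rfl, h⟩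
    · rintro ⟨a, ha, h⟩
      rcases ha with (rfl | rfl) | rfl
      · exact ⟨a, Or.inl rfl, h⟩
      · rcases hdome z h with rfl | h'
        · exact ⟨x, Or.inr rfl, hux.symm⟩
        · exact ⟨u, Or.inl rfl, h'⟩
      · exact ⟨a, Or.inr rfl, h⟩
  have := cov_eq_length_eq huni hiso hlegal1 hlegal2
    (by intro y hy; simp at hy; rcases hy with rfl | rfl <;> simp) hcov
  simp at this

lemma comp_multipartite (huni : TotalKUniform G k) (hiso : NoIsolatedVerts G) {u : V}
    (hu : ∀ z, G.Reachable u z → z = u ∨ G.Adj u z)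
    {p q : V} (hp : G.Reachable u p) (hq : G.Reachable u q)
    (hnadj : ¬ G.Adj p q) (hne : p ≠ q) {w : V} (hw : G.Adj q w) (hnw : ¬ G.Adj p w) : False := by
  have hqu : q ≠ u := by
    rintro rfl
    rcases hu p hp with rfl | h
    · exact hne rfl
    · exact hnadj h.symm
  have hadjuq : G.Adj u q := (hu q hq).resolve_left hqu
  have hpu : p ≠ u := by
    rintro rfl
    exact hnadj hadjuq
  have hadjup : G.Adj u p := (hu p hp).resolve_left hpu
  have hlegal1 : LegalSeq G ([p] ++ [u]) := by
    refine legal_append_one.mpr ⟨legal_singleton p, by simpa using hpu.symm, Or.inr ⟨q, hadjuq, ?_⟩⟩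
    rw [mem_cov]; rintro ⟨z, hz, hz2⟩
    simp only [List.mem_singleton] at hz
    exact hnadj (hz ▸ hz2)
  have hlegal2 : LegalSeq G (([p] ++ [q]) ++ [u]) := by
    refine legal_append_one.mpr ⟨?_, ?_, Or.inr ⟨p, hadjup, ?_⟩⟩
    · refine legal_append_one.mpr ⟨legal_singleton p, by simpa using hne.symm, Or.inr ⟨w, hw, ?_⟩⟩
      rw [mem_cov]; rintro ⟨z, hz, hz2⟩
      simp only [List.mem_singleton] at hz
      exact hnw (hz ▸ hz2)
    · simp only [List.mem_append, List.mem_singleton]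
      rintro (rfl | rfl)
      · exact hpu rfl
      · exact hqu rfl
    · rw [mem_cov]; rintro ⟨z, hz, hz2⟩
      simp only [List.mem_append, List.mem_singleton] at hz
      rcases hz with rfl | rfl
      · exact G.irrefl hz2
      · exact hnadj hz2.symm
  have hcov : cov G ([p] ++ [u]) = cov G (([p] ++ [q]) ++ [u]) := by
    ext z
    simp only [mem_cov, List.mem_append, List.mem_singleton]
    constructor
    · rintro ⟨a, ha, h⟩
      rcases ha with rfl | rfl
      · exact ⟨a, Or.inl (Or.inl rfl), h⟩
      · exact ⟨a, Or.inr rfl, h⟩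
    · rintro ⟨a, ha, h⟩
      rcases ha with (rfl | rfl) | rfl
      · exact ⟨a, Or.inl rfl, h⟩
      · have hz : G.Reachable u z := (hadjuq.reachable).trans h.reachable
        rcases hu z hz with rfl | h'
        · exact ⟨p, Or.inl rfl, hadjup.symm⟩
        · exact ⟨u, Or.inr rfl, h'⟩
      · exact ⟨a, Or.inr rfl, h⟩
  have := cov_eq_length_eq huni hiso hlegal1 hlegal2
    (by intro y hy; simp at hy; rcases hy with rfl | rfl <;> simp) hcov
  simp at this

end Uniform
lemma cycAdjVal {n : ℕ} (hn : 2 ≤ n) (a b : Fin n) :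
    (cycleGraph n).Adj a b ↔ (a.val = b.val + 1 ∨ b.val = a.val + 1 ∨
      (a.val = 0 ∧ b.val = n - 1) ∨ (b.val = 0 ∧ a.val = n - 1)) := by
  have key : ∀ x y : Fin n, ((x - y).val = 1 ↔ (x.val = y.val + 1 ∨ (x.val = 0 ∧ y.val = n - 1))) := by
    intro x y
    have hx := x.isLt; have hy := y.isLt
    have hv : (x - y).val = (n - y.val + x.val) % n := by rw [Fin.sub_def]
    rcases le_or_gt y.val x.val with h | h
    · have h1 : n - y.val + x.val = n + (x.val - y.val) := by omega
      rw [hv, h1, Nat.add_mod_left, Nat.mod_eq_of_lt (by omega)]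
      omega
    · rw [hv, Nat.mod_eq_of_lt (by omega)]
      omega
  rw [cycleGraph_adj', key, key]
  omega

lemma no_cycle (hch : IsChordal G) {n : ℕ} (hn : 4 ≤ n) (v : Fin n → V)
    (hinj : Function.Injective v)
    (hadj : ∀ i j, G.Adj (v i) (v j) ↔ (cycleGraph n).Adj i j) : False := by
  apply hch n hn (Set.range v)
  refine ⟨SimpleGraph.Iso.symm ⟨Equiv.ofInjective v hinj, ?_⟩⟩
  intro a b
  simpa using hadj a b

lemma exists_dom_edge [Finite V] (hch : IsChordal G) {u₀ v₀ : V} (h₀ : G.Adj u₀ v₀) :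
    ∃ u v, G.Adj u v ∧ G.Reachable u₀ u ∧ ∀ w, G.Adj v w → w = u ∨ G.Adj u w := by
  by_contra hno
  push_neg at hno
  have hesc : ∀ u v, G.Adj u v → G.Reachable u₀ u → ∃ x, G.Adj v x ∧ x ≠ u ∧ ¬ G.Adj u x := by
    intro u v h hr
    obtain ⟨x, hx1, hx2⟩ := hno u v h hr
    exact ⟨x, hx1, fun he => hx2.1 he, fun ha => hx2.2 ha⟩
  have key : ∀ t, 2 ≤ t → ∃ w : ℕ → V,
      (∀ i j, i < t → j < t → w i = w j → i = j) ∧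
      (∀ i, i + 1 < t → G.Adj (w i) (w (i + 1))) ∧
      (∀ i j, i + 2 ≤ j → j < t → ¬ G.Adj (w i) (w j)) ∧
      (∀ i, i < t → G.Reachable u₀ (w i)) := by
    intro t ht
    induction t, ht using Nat.le_induction with
    | base =>
      refine ⟨fun i => if i = 0 then u₀ else v₀, ?_, ?_, ?_, ?_⟩
      · intro i j hi hj hij
        dsimp only at hij
        by_cases h1 : i = 0 <;> by_cases h2 : j = 0
        · omega
        · rw [if_pos h1, if_neg h2] at hij; exact absurd hij h₀.ne
        · rw [if_neg h1, if_pos h2] at hij; exact absurd hij.symm h₀.ne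
        · omega
      · intro i hi
        have hi0 : i = 0 := by omega
        subst hi0
        simpa using h₀
      · intro i j hij hj; omega
      · intro i hi
        dsimp only
        by_cases h1 : i = 0
        · rw [if_pos h1]
        · rw [if_neg h1]; exact h₀.reachable
    | succ t ht ih =>
      obtain ⟨a, rfl⟩ : ∃ a, t = a + 2 := ⟨t - 2, by omega⟩
      obtain ⟨w, hinj, hadj, hnon, hreach⟩ := ih
      have hlast : G.Adj (w a) (w (a + 1)) := hadj a (by omega)
      obtain ⟨x, hx1, hx2, hx3⟩ := hesc (w a) (w (a + 1)) hlast (hreach a (by omega))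
      have hxne : ∀ i, i ≤ a + 1 → x ≠ w i := by
        intro i hi he
        rcases Nat.lt_or_ge i (a + 1) with h' | h'
        · rcases Nat.lt_or_ge i a with h'' | h''
          · exact hnon i (a + 1) (by omega) (by omega) (by rw [← he]; exact hx1.symm)
          · have hia : i = a := by omega
            subst hia
            exact hx2 he
        · have hia : i = a + 1 := by omega
          subst hia
          exact G.irrefl (he ▸ hx1)
      by_cases hcase : ∃ i, i + 1 ≤ a ∧ G.Adj (w i) x
      · exfalso
        classical
        obtain ⟨b, hb1, hb2, hbmax⟩ : ∃ b, b + 1 ≤ a ∧ G.Adj (w b) x ∧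
            ∀ j, j + 1 ≤ a → G.Adj (w j) x → j ≤ b := by
          obtain ⟨i₀, h1, h2⟩ := hcase
          refine ⟨Nat.findGreatest (fun i => i + 1 ≤ a ∧ G.Adj (w i) x) a, ?_, ?_, ?_⟩
          · exact (Nat.findGreatest_spec (P := fun i => i + 1 ≤ a ∧ G.Adj (w i) x)
              (by omega : i₀ ≤ a) ⟨h1, h2⟩).1
          · exact (Nat.findGreatest_spec (P := fun i => i + 1 ≤ a ∧ G.Adj (w i) x)
              (by omega : i₀ ≤ a) ⟨h1, h2⟩).2
          · exact fun j hj1 hj2 => Nat.le_findGreatest (by omega) ⟨hj1, hj2⟩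
        obtain ⟨d, hd⟩ : ∃ d, a = b + 1 + d := ⟨a - b - 1, by omega⟩
        subst hd
        have hcinj : Function.Injective
            (fun j : Fin (d + 4) => if (j : ℕ) = d + 3 then x else w (b + (j : ℕ))) := by
          intro j j' hjj
          have hj := j.isLt; have hj' := j'.isLt
          dsimp only at hjj
          by_cases h1 : (j : ℕ) = d + 3 <;> by_cases h2 : (j' : ℕ) = d + 3
          · exact Fin.ext (by omega)
          · rw [if_pos h1, if_neg h2] at hjj
            exact absurd hjj (hxne (b + (j' : ℕ)) (by omega))
          · rw [if_neg h1, if_pos h2] at hjj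
            exact absurd hjj.symm (hxne (b + (j : ℕ)) (by omega))
          · rw [if_neg h1, if_neg h2] at hjj
            exact Fin.ext (by have := hinj _ _ (by omega) (by omega) hjj; omega)
        apply no_cycle hch (by omega) _ hcinj
        intro p q
        rw [cycAdjVal (by omega)]
        have hp := p.isLt; have hq := q.isLt
        have hn1 : (d + 4) - 1 = d + 3 := by omega
        rw [hn1]
        by_cases h1 : (p : ℕ) = d + 3 <;> by_cases h2 : (q : ℕ) = d + 3
        · rw [if_pos h1, if_pos h2]
          constructor
          · exact fun h => (G.irrefl h).elim
          · intro h; omega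
        · rw [if_pos h1, if_neg h2]
          constructor
          · intro h
            have hq02 : (q : ℕ) = 0 ∨ (q : ℕ) = d + 2 := by
              rcases Nat.lt_or_ge (b + (q : ℕ)) (b + 1 + d) with h'' | h''
              · have := hbmax (b + (q : ℕ)) (by omega) h.symm
                omega
              · rcases Nat.eq_or_lt_of_le h'' with he | h'''
                · exfalso
                  apply hx3
                  rw [← he] at h
                  exact h.symm
                · omega
            omega
          · intro h
            have hq02 : (q : ℕ) = 0 ∨ (q : ℕ) = d + 2 := by omega
            rcases hq02 with h' | h'
            · rw [h']
              simpa using hb2.symm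
            · rw [h']
              have he2 : b + (d + 2) = b + 1 + d + 1 := by omega
              rw [he2]
              exact hx1.symm
        · rw [if_neg h1, if_pos h2]
          constructor
          · intro h
            have hp02 : (p : ℕ) = 0 ∨ (p : ℕ) = d + 2 := by
              rcases Nat.lt_or_ge (b + (p : ℕ)) (b + 1 + d) with h'' | h''
              · have := hbmax (b + (p : ℕ)) (by omega) h
                omega
              · rcases Nat.eq_or_lt_of_le h'' with he | h'''
                · exfalso
                  apply hx3
                  rw [← he] at h
                  exact h
                · omega
            omega
          · intro h
            have hp02 : (p : ℕ) = 0 ∨ (p : ℕ) = d + 2 := by omega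
            rcases hp02 with h' | h'
            · rw [h']
              simpa using hb2
            · rw [h']
              have he2 : b + (d + 2) = b + 1 + d + 1 := by omega
              rw [he2]
              exact hx1
        · rw [if_neg h1, if_neg h2]
          constructor
          · intro h
            rcases Nat.lt_or_ge (b + (p : ℕ)) (b + (q : ℕ)) with h' | h'
            · rcases (by omega : b + (p : ℕ) + 1 = b + (q : ℕ) ∨ b + (p : ℕ) + 2 ≤ b + (q : ℕ)) with hle | hle
              · omega
              · exact absurd h (hnon _ _ hle (by omega))
            · rcases Nat.eq_or_lt_of_le h' with he | h''
              · exfalso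
                rw [show b + (q : ℕ) = b + (p : ℕ) from he] at h
                exact G.irrefl h
              · rcases (by omega : b + (q : ℕ) + 1 = b + (p : ℕ) ∨ b + (q : ℕ) + 2 ≤ b + (p : ℕ)) with hle | hle
                · omega
                · exact absurd h.symm (hnon _ _ hle (by omega))
          · intro h
            rcases h with h | h | h | h
            · have he : b + (q : ℕ) + 1 = b + (p : ℕ) := by omega
              exact he ▸ (hadj (b + (q : ℕ)) (by omega)).symm
            · have he : b + (p : ℕ) + 1 = b + (q : ℕ) := by omega
              exact he ▸ (hadj (b + (p : ℕ)) (by omega))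
            · omega
            · omega
      · push_neg at hcase
        refine ⟨fun i => if i = a + 2 then x else w i, ?_, ?_, ?_, ?_⟩
        · intro i j hi hj hij
          dsimp only at hij
          by_cases h1 : i = a + 2 <;> by_cases h2 : j = a + 2
          · omega
          · rw [if_pos h1, if_neg h2] at hij
            exact absurd hij (hxne j (by omega))
          · rw [if_neg h1, if_pos h2] at hij
            exact absurd hij.symm (hxne i (by omega))
          · rw [if_neg h1, if_neg h2] at hij
            exact hinj i j (by omega) (by omega) hij
        · intro i hi
          dsimp only
          by_cases h1 : i + 1 = a + 2
          · have hi' : i = a + 1 := by omega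
            subst hi'
            rw [if_neg (by omega), if_pos h1]
            exact hx1
          · rw [if_neg (by omega : ¬ i = a + 2), if_neg h1]
            exact hadj i (by omega)
        · intro i j hij hj
          dsimp only
          by_cases h2 : j = a + 2
          · subst h2
            rw [if_neg (by omega : ¬ i = a + 2), if_pos rfl]
            rcases Nat.lt_or_ge i a with h'' | h''
            · exact fun h => hcase i (by omega) h
            · have hi' : i = a := by omega
              subst hi'
              exact hx3
          · rw [if_neg (by omega : ¬ i = a + 2), if_neg h2]
            exact hnon i j hij (by omega)
        · intro i hi
          dsimp only
          by_cases h1 : i = a + 2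
          · rw [if_pos h1]
            exact (hreach (a + 1) (by omega)).trans hx1.reachable
          · rw [if_neg h1]
            exact hreach i (by omega)
  have hcard : 0 < Nat.card V := Nat.card_pos_iff.mpr ⟨⟨u₀⟩, inferInstance⟩
  obtain ⟨w, hinj, -, -, -⟩ := key (Nat.card V + 1) (by omega)
  have hfi : Function.Injective (fun i : Fin (Nat.card V + 1) => w i) := by
    intro i j hij
    exact Fin.ext (hinj i j i.isLt j.isLt hij)
  have := Nat.card_le_card_of_injective _ hfi
  simp at this


section ForwardAux

variable {V : Type*} [Finite V] {G : SimpleGraph V} {k : ℕ}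

lemma walk_dom {u : V} (hI : ∀ x, G.Adj u x → ∀ w, G.Adj x w → w = u ∨ G.Adj u w)
    {a b : V} (p : G.Walk a b) : (a = u ∨ G.Adj u a) → (b = u ∨ G.Adj u b) := by
  induction p with
  | nil => exact id
  | @cons a' c' b' h q ih =>
    intro ha
    apply ih
    rcases ha with rfl | ha
    · exact Or.inr h
    · exact hI a' ha c' h

lemma exists_comp_dominator (huni : TotalKUniform G k) (hiso : NoIsolatedVerts G)
    (hch : IsChordal G) (K : G.ConnectedComponent) :
    ∃ u, G.connectedComponentMk u = K ∧ ∀ z, G.Reachable u z → z = u ∨ G.Adj u z := by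
  obtain ⟨z₀, rfl⟩ := K.exists_rep
  obtain ⟨z₁, hz₁⟩ := hiso z₀
  obtain ⟨u, v, huv, hru, hdom⟩ := exists_dom_edge hch hz₁
  have hI := dom_propagate huni hiso huv hdom
  refine ⟨u, (ConnectedComponent.sound hru).symm, ?_⟩
  intro z hz
  obtain ⟨p⟩ := hz
  exact walk_dom hI p (Or.inl rfl)

lemma nonadj_same_nbhd (huni : TotalKUniform G k) (hiso : NoIsolatedVerts G) (hch : IsChordal G)
    {p q : V} (hcomp : G.connectedComponentMk p = G.connectedComponentMk q)
    (hne : p ≠ q) (hnadj : ¬ G.Adj p q) : ∀ w, G.Adj p w ↔ G.Adj q w := by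
  obtain ⟨u, hK, hu⟩ := exists_comp_dominator huni hiso hch (G.connectedComponentMk p)
  have hup : G.Reachable u p := ConnectedComponent.exact hK
  have huq : G.Reachable u q := ConnectedComponent.exact (hK.trans hcomp)
  intro w
  constructor
  · intro h
    by_contra h'
    exact comp_multipartite huni hiso hu huq hup (fun hh => hnadj hh.symm) hne.symm h h'
  · intro h
    by_contra h'
    exact comp_multipartite huni hiso hu hup huq hnadj hne h h'

lemma exists_max_seq (huni : TotalKUniform G k) (hiso : NoIsolatedVerts G) (hch : IsChordal G) :
    ∃ s : List V, LegalSeq G s ∧ s.length = 2 * Nat.card G.ConnectedComponent ∧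
      ∀ z : V, z ∈ cov G s := by
  classical
  choose ud hud1 hud2 using exists_comp_dominator huni hiso hch
  choose xd hxd using fun K => hiso (ud K)
  have key : ∀ l : List G.ConnectedComponent, l.Nodup →
      ∃ s : List V, LegalSeq G s ∧ s.length = 2 * l.length ∧
        (∀ y ∈ s, G.connectedComponentMk y ∈ l) ∧
        (∀ z : V, G.connectedComponentMk z ∈ l → z ∈ cov G s) := by
    intro l hl
    induction l with
    | nil => exact ⟨[], legal_nil, by simp, by simp, by simp⟩
    | cons K l' ih =>
      have hKl' := (List.nodup_cons.mp hl).1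
      obtain ⟨s, hs, hlen, hmem, hcov⟩ := ih (List.nodup_cons.mp hl).2
      have hcovcomp : ∀ y, y ∈ cov G s → G.connectedComponentMk y ∈ l' := by
        intro y hy
        obtain ⟨z, hz, hadj⟩ := mem_cov.mp hy
        have h := hmem z hz
        rwa [ConnectedComponent.sound hadj.reachable] at h
      have hmku : G.connectedComponentMk (ud K) = K := hud1 K
      have hmkx : G.connectedComponentMk (xd K) = K :=
        (ConnectedComponent.sound (hxd K).reachable).symm.trans hmku
      have hxs : xd K ∉ s := fun h => hKl' (by rw [← hmkx]; exact hmem _ h)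
      have hus : ud K ∉ s := fun h => hKl' (by rw [← hmku]; exact hmem _ h)
      have hucov : ud K ∉ cov G s := fun h => hKl' (by rw [← hmku]; exact hcovcomp _ h)
      have hxcov : xd K ∉ cov G s := fun h => hKl' (by rw [← hmkx]; exact hcovcomp _ h)
      have hs1 : LegalSeq G (s ++ [xd K]) :=
        legal_append_one.mpr ⟨hs, hxs, Or.inr ⟨ud K, (hxd K).symm, hucov⟩⟩
      have hs2 : LegalSeq G ((s ++ [xd K]) ++ [ud K]) := by
        refine legal_append_one.mpr ⟨hs1, ?_, Or.inr ⟨xd K, hxd K, ?_⟩⟩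
        · simp only [List.mem_append, List.mem_singleton]
          rintro (h | h)
          · exact hus h
          · exact G.irrefl (h ▸ hxd K)
        · rw [cov_append]
          rintro (h | h)
          · exact hxcov h
          · obtain ⟨z, hz, hadj⟩ := mem_cov.mp h
            simp only [List.mem_singleton] at hz
            exact G.irrefl (hz ▸ hadj)
      refine ⟨(s ++ [xd K]) ++ [ud K], hs2, by simp [hlen]; omega, ?_, ?_⟩
      · intro y hy
        simp only [List.mem_append, List.mem_singleton] at hy
        rcases hy with (hy | rfl) | rfl
        · exact List.mem_cons_of_mem _ (hmem y hy)
        · exact List.mem_cons.mpr (Or.inl hmkx)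
        · exact List.mem_cons.mpr (Or.inl hmku)
      · intro z hz
        rcases List.mem_cons.mp hz with hz | hz
        · -- z in component K
          by_cases hzu : z = ud K
          · subst hzu
            exact mem_cov.mpr ⟨xd K, by simp, (hxd K).symm⟩
          · have hr : G.Reachable (ud K) z := ConnectedComponent.exact (by rw [hmku, hz])
            rcases hud2 K z hr with h | h
            · exact absurd h hzu
            · exact mem_cov.mpr ⟨ud K, by simp, h⟩
        · rw [cov_append, cov_append]
          exact Or.inl (Or.inl (hcov z hz))
  have _ := Fintype.ofFinite G.ConnectedComponent
  obtain ⟨s, hs, hlen, -, hcov⟩ := key Finset.univ.toList Finset.univ.nodup_toList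
  refine ⟨s, hs, ?_, fun z => hcov z (by simp)⟩
  rw [hlen, Finset.length_toList, Finset.card_univ, Nat.card_eq_fintype_card]

lemma forward_k_eq (huni : TotalKUniform G k) (hiso : NoIsolatedVerts G) (hch : IsChordal G) :
    k = 2 * Nat.card G.ConnectedComponent := by
  obtain ⟨s, hs, hlen, hcov⟩ := exists_max_seq huni hiso hch
  have := maximal_length huni hiso hs (fun x _ w _ => hcov w)
  omega

lemma c4_contra (hch : IsChordal G) {a b a' b' : V}
    (hab : G.Adj a b) (hba' : G.Adj b a') (ha'b' : G.Adj a' b') (hb'a : G.Adj b' a)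
    (haa' : ¬ G.Adj a a') (hbb' : ¬ G.Adj b b') (hne1 : a ≠ a') (hne2 : b ≠ b') : False := by
  have h1 : a ≠ b := hab.ne
  have h2 : a ≠ b' := hb'a.ne'
  have h3 : b ≠ a' := hba'.ne
  have h4 : a' ≠ b' := ha'b'.ne
  apply no_cycle hch (le_refl 4) ![a, b, a', b']
  · intro i j hij
    fin_cases i <;> fin_cases j <;> simp_all
  · intro i j
    fin_cases i <;> fin_cases j <;>
      simp only [Matrix.cons_val_zero, Matrix.cons_val_one, Matrix.head_cons,
        Matrix.cons_val_two, Matrix.tail_cons, Matrix.cons_val_three] <;>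
      first
        | (rw [iff_true_intro (by decide : (cycleGraph 4).Adj _ _)]; simp only [iff_true]) <;>
            first
              | exact hab | exact hab.symm | exact hba' | exact hba'.symm
              | exact ha'b' | exact ha'b'.symm | exact hb'a | exact hb'a.symm
        | (rw [iff_false_intro (by decide : ¬ (cycleGraph 4).Adj _ _)]; simp only [iff_false]) <;>
            first
              | exact G.irrefl | exact haa' | exact fun h => haa' h.symm
              | exact hbb' | exact fun h => hbb' h.symm

end ForwardAux

section BackwardAux

variable {V : Type*} [Finite V] {G : SimpleGraph V} {m : ℕ} {f : V → Fin m} {c : V → ℕ}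

lemma legal_no_two (hiff : ∀ u v : V, G.Adj u v ↔ (f u = f v ∧ c u ≠ c v))
    {s : List V} (hs : LegalSeq G s) {p q : ℕ} (hpq : p < q) (hq : q < s.length)
    (hf : f (s[p]'(by omega)) = f (s[q]'hq)) (hc : c (s[p]'(by omega)) = c (s[q]'hq)) :
    False := by
  obtain ⟨-, hw⟩ := hs
  obtain ⟨w, hw1, hw2⟩ := hw q hq (by omega)
  rw [List.get_eq_getElem] at hw1
  apply hw2 (s[p]'(by omega)) ?_ ?_
  · have h1 : (s.take q)[p]'(by rw [List.length_take]; omega) = s[p]'(by omega) :=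
      List.getElem_take
    exact h1 ▸ List.getElem_mem _
  · rw [hiff] at hw1 ⊢
    exact ⟨hf.trans hw1.1, fun hh => hw1.2 (hc.symm.trans hh)⟩

lemma legal_no_three (hiff : ∀ u v : V, G.Adj u v ↔ (f u = f v ∧ c u ≠ c v))
    {s : List V} (hs : LegalSeq G s) {p q r : ℕ} (hpq : p < q) (hqr : q < r) (hr : r < s.length)
    (hf1 : f (s[p]'(by omega)) = f (s[r]'hr)) (hf2 : f (s[q]'(by omega)) = f (s[r]'hr)) :
    False := by
  have hcpq : c (s[p]'(by omega)) ≠ c (s[q]'(by omega)) := fun h =>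
    legal_no_two hiff hs hpq (by omega) (hf1.trans hf2.symm) h
  obtain ⟨-, hw⟩ := hs
  obtain ⟨w, hw1, hw2⟩ := hw r hr (by omega)
  rw [List.get_eq_getElem] at hw1
  rw [hiff] at hw1
  have hmem : ∀ (i : ℕ) (h : i < r), s[i]'(by omega) ∈ s.take r := by
    intro i h
    have h1 : (s.take r)[i]'(by rw [List.length_take]; omega) = s[i]'(by omega) :=
      List.getElem_take
    exact h1 ▸ List.getElem_mem _
  by_cases h : c w = c (s[p]'(by omega))
  · apply hw2 (s[q]'(by omega)) (hmem q hqr)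
    rw [hiff]
    exact ⟨hf2.trans hw1.1, fun hh => hcpq (hh.trans h).symm⟩
  · apply hw2 (s[p]'(by omega)) (hmem p (by omega))
    rw [hiff]
    exact ⟨hf1.trans hw1.1, fun hh => h hh.symm⟩

lemma three_mem_contra (hiff : ∀ u v : V, G.Adj u v ↔ (f u = f v ∧ c u ≠ c v))
    {s : List V} (hs : LegalSeq G s) {x y z : V}
    (hx : x ∈ s) (hy : y ∈ s) (hz : z ∈ s) (hxy : x ≠ y) (hxz : x ≠ z) (hyz : y ≠ z)
    (hfxy : f x = f y) (hfxz : f x = f z) : False := by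
  obtain ⟨px, hpx, hgx⟩ := List.getElem_of_mem hx
  obtain ⟨py, hpy, hgy⟩ := List.getElem_of_mem hy
  obtain ⟨pz, hpz, hgz⟩ := List.getElem_of_mem hz
  have hne1 : px ≠ py := fun h => hxy (by subst h; rw [← hgx, ← hgy])
  have hne2 : px ≠ pz := fun h => hxz (by subst h; rw [← hgx, ← hgz])
  have hne3 : py ≠ pz := fun h => hyz (by subst h; rw [← hgy, ← hgz])
  -- all three fibers are equal
  have key : ∀ (a b d : ℕ) (ha : a < s.length) (hb : b < s.length) (hd : d < s.length),
      a < b → b < d → f (s[a]'ha) = f x → f (s[b]'hb) = f x → f (s[d]'hd) = f x → False := by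
    intro a b d ha hb hd hab hbd h1 h2 h3
    exact legal_no_three hiff hs hab hbd hd (h1.trans h3.symm) (h2.trans h3.symm)
  have gx : f (s[px]'hpx) = f x := by rw [hgx]
  have gy : f (s[py]'hpy) = f x := by rw [hgy, ← hfxy]
  have gz : f (s[pz]'hpz) = f x := by rw [hgz, ← hfxz]
  rcases Nat.lt_trichotomy px py with h1 | h1 | h1
  · rcases Nat.lt_trichotomy py pz with h2 | h2 | h2
    · exact key px py pz hpx hpy hpz h1 h2 gx gy gz
    · exact absurd h2 hne3
    · rcases Nat.lt_trichotomy px pz with h3 | h3 | h3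
      · exact key px pz py hpx hpz hpy h3 h2 gx gz gy
      · exact absurd h3 hne2
      · exact key pz px py hpz hpx hpy h3 h1 gz gx gy
  · exact absurd h1 hne1
  · rcases Nat.lt_trichotomy px pz with h2 | h2 | h2
    · exact key py px pz hpy hpx hpz h1 h2 gy gx gz
    · exact absurd h2 hne2
    · rcases Nat.lt_trichotomy py pz with h3 | h3 | h3
      · exact key py pz px hpy hpz hpx h3 h2 gy gz gx
      · exact absurd h3 hne3
      · exact key pz py px hpz hpy hpx h3 h1 gz gy gx

lemma legal_length_le_two_mul (hiff : ∀ u v : V, G.Adj u v ↔ (f u = f v ∧ c u ≠ c v))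
    {s : List V} (hs : LegalSeq G s) : s.length ≤ 2 * m := by
  classical
  have _ := Fintype.ofFinite V
  have hcard : s.length = s.toFinset.card := (List.toFinset_card_of_nodup hs.1).symm
  rw [hcard, Finset.card_eq_sum_card_fiberwise (f := f) (t := Finset.univ)
    (fun x _ => Finset.mem_univ _)]
  have hfib : ∀ i : Fin m, (s.toFinset.filter (fun x => f x = i)).card ≤ 2 := by
    intro i
    by_contra hgt
    push_neg at hgt
    obtain ⟨x, y, z, hx, hy, hz, hxy, hxz, hyz⟩ := Finset.two_lt_card_iff.mp hgt
    simp only [Finset.mem_filter, List.mem_toFinset] at hx hy hz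
    exact three_mem_contra hiff hs hx.1 hy.1 hz.1 hxy hxz hyz (hx.2.trans hy.2.symm)
      (hx.2.trans hz.2.symm)
  calc ∑ i : Fin m, (s.toFinset.filter (fun x => f x = i)).card
      ≤ ∑ _i : Fin m, 2 := Finset.sum_le_sum (fun i _ => hfib i)
    _ = 2 * m := by simp [Finset.sum_const, mul_comm]

lemma backward_seq (hiff : ∀ u v : V, G.Adj u v ↔ (f u = f v ∧ c u ≠ c v))
    (hpart2 : ∀ i : Fin m, ∃ u v : V, f u = i ∧ f v = i ∧ c u ≠ c v) :
    ∃ s : List V, LegalSeq G s ∧ s.length = 2 * m ∧ ∀ z : V, z ∈ cov G s := by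
  classical
  choose u v hu hv huv using hpart2
  have hadjuv : ∀ i, G.Adj (u i) (v i) := fun i => (hiff _ _).mpr ⟨by rw [hu, hv], huv i⟩
  have key : ∀ l : List (Fin m), l.Nodup → ∃ s, LegalSeq G s ∧ s.length = 2 * l.length ∧
      (∀ y ∈ s, f y ∈ l) ∧ (∀ z : V, f z ∈ l → z ∈ cov G s) := by
    intro l hl
    induction l with
    | nil => exact ⟨[], legal_nil, by simp, by simp, by simp⟩
    | cons i l' ih =>
      have hil' := (List.nodup_cons.mp hl).1
      obtain ⟨s, hs, hlen, hmem, hcov⟩ := ih (List.nodup_cons.mp hl).2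
      have hcovf : ∀ y, y ∈ cov G s → f y ∈ l' := by
        intro y hy
        obtain ⟨z, hz, hadj⟩ := mem_cov.mp hy
        have h := hmem z hz
        rwa [((hiff z y).mp hadj).1] at h
      have hus : u i ∉ s := fun h => hil' (by rw [← hu i]; exact hmem _ h)
      have hvs : v i ∉ s := fun h => hil' (by rw [← hv i]; exact hmem _ h)
      have hucov : u i ∉ cov G s := fun h => hil' (by rw [← hu i]; exact hcovf _ h)
      have hvcov : v i ∉ cov G s := fun h => hil' (by rw [← hv i]; exact hcovf _ h)
      have hs1 : LegalSeq G (s ++ [u i]) :=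
        legal_append_one.mpr ⟨hs, hus, Or.inr ⟨v i, hadjuv i, hvcov⟩⟩
      have hs2 : LegalSeq G ((s ++ [u i]) ++ [v i]) := by
        refine legal_append_one.mpr ⟨hs1, ?_, Or.inr ⟨u i, (hadjuv i).symm, ?_⟩⟩
        · simp only [List.mem_append, List.mem_singleton]
          rintro (h | h)
          · exact hvs h
          · exact G.irrefl (h ▸ (hadjuv i).symm)
        · rw [cov_append]
          rintro (h | h)
          · exact hucov h
          · obtain ⟨z, hz, hadj⟩ := mem_cov.mp h
            simp only [List.mem_singleton] at hz
            exact G.irrefl (hz ▸ hadj)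
      refine ⟨(s ++ [u i]) ++ [v i], hs2, by simp [hlen]; omega, ?_, ?_⟩
      · intro y hy
        simp only [List.mem_append, List.mem_singleton] at hy
        rcases hy with (hy | rfl) | rfl
        · exact List.mem_cons_of_mem _ (hmem y hy)
        · exact List.mem_cons.mpr (Or.inl (hu i))
        · exact List.mem_cons.mpr (Or.inl (hv i))
      · intro z hz
        rcases List.mem_cons.mp hz with hz | hz
        · -- f z = i : z is adjacent to u i or to v i
          by_cases hcz : c z = c (u i)
          · have : G.Adj (v i) z := (hiff _ _).mpr ⟨by rw [hv, ← hz], fun hh => (huv i) (by rw [hcz] at hh; exact hh.symm)⟩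
            exact mem_cov.mpr ⟨v i, by simp, this⟩
          · have : G.Adj (u i) z := (hiff _ _).mpr ⟨by rw [hu, ← hz], fun hh => hcz hh.symm⟩
            exact mem_cov.mpr ⟨u i, by simp, this⟩
        · rw [cov_append, cov_append]
          exact Or.inl (Or.inl (hcov z hz))
  obtain ⟨s, hs, hlen, -, hcov⟩ := key Finset.univ.toList Finset.univ.nodup_toList
  refine ⟨s, hs, ?_, fun z => hcov z (by simp)⟩
  rw [hlen, Finset.length_toList, Finset.card_univ, Fintype.card_fin]

lemma totdom_ge (hiff : ∀ u v : V, G.Adj u v ↔ (f u = f v ∧ c u ≠ c v))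
    (hpart2 : ∀ i : Fin m, ∃ u v : V, f u = i ∧ f v = i ∧ c u ≠ c v)
    {A : Set V} (hA : TotalDomSet G A) : 2 * m ≤ A.ncard := by
  classical
  have h1 : ∀ i : Fin m, ∃ a₁ a₂ : V, a₁ ∈ A ∧ a₂ ∈ A ∧ f a₁ = i ∧ f a₂ = i ∧ a₁ ≠ a₂ := by
    intro i
    obtain ⟨p, q, hp, hq, hpq⟩ := hpart2 i
    obtain ⟨a₁, ha₁, hadj₁⟩ := hA p
    obtain ⟨a₂, ha₂, hadj₂⟩ := hA a₁
    refine ⟨a₁, a₂, ha₁, ha₂, ?_, ?_, hadj₂.ne⟩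
    · rw [← ((hiff p a₁).mp hadj₁).1, hp]
    · rw [← ((hiff a₁ a₂).mp hadj₂).1, ← ((hiff p a₁).mp hadj₁).1, hp]
  choose g₁ g₂ hg1 hg2 hgf1 hgf2 hgne using h1
  have hginj : Function.Injective
      (fun p : Fin m × Bool => (⟨if p.2 then g₁ p.1 else g₂ p.1, by
        rcases p with ⟨i, b⟩
        cases b
        · exact hg2 i
        · exact hg1 i⟩ : A)) := by
    rintro ⟨i, b⟩ ⟨i', b'⟩ hpq
    simp only [Subtype.mk_eq_mk] at hpq
    cases b <;> cases b' <;> simp at hpq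
    · have hii : i = i' := by rw [← hgf2 i, ← hgf2 i', hpq]
      subst hii; rfl
    · have hii : i = i' := by rw [← hgf2 i, ← hgf1 i', hpq]
      subst hii
      exact absurd hpq.symm (hgne i)
    · have hii : i = i' := by rw [← hgf1 i, ← hgf2 i', hpq]
      subst hii
      exact absurd hpq (hgne i)
    · have hii : i = i' := by rw [← hgf1 i, ← hgf1 i', hpq]
      subst hii; rfl
  have hle := Nat.card_le_card_of_injective _ hginj
  rw [Nat.card_prod] at hle
  simp only [Nat.card_eq_fintype_card, Fintype.card_fin, Fintype.card_bool] at hle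
  have heq : Nat.card { x // x ∈ A } = A.ncard := Nat.card_coe_set_eq A
  omega

lemma backward_chordal (hiff : ∀ u v : V, G.Adj u v ↔ (f u = f v ∧ c u ≠ c v))
    (hbig : ∀ i : Fin m, ∀ j₁ j₂ : ℕ, 1 < {x : V | f x = i ∧ c x = j₁}.ncard →
      1 < {x : V | f x = i ∧ c x = j₂}.ncard → j₁ = j₂) : IsChordal G := by
  intro n hn S hne
  obtain ⟨e⟩ := hne
  set a : Fin n → V := fun i => ((e.symm i) : V) with ha
  have hadj : ∀ i j, G.Adj (a i) (a j) ↔ (cycleGraph n).Adj i j := by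
    intro i j
    rw [← e.symm.map_rel_iff]
    rfl
  have hainj : Function.Injective a := fun i j h =>
    e.symm.injective (Subtype.val_injective h)
  have h2n : 2 ≤ n := by omega
  set i0 : Fin n := ⟨0, by omega⟩
  set i1 : Fin n := ⟨1, by omega⟩
  set i2 : Fin n := ⟨2, by omega⟩
  set i3 : Fin n := ⟨3, by omega⟩
  have hv0 : (i0 : ℕ) = 0 := rfl
  have hv1 : (i1 : ℕ) = 1 := rfl
  have hv2 : (i2 : ℕ) = 2 := rfl
  have hv3 : (i3 : ℕ) = 3 := rfl
  have h01 : G.Adj (a i0) (a i1) := (hadj _ _).mpr (by rw [cycAdjVal h2n, hv0, hv1]; omega)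
  have h12 : G.Adj (a i1) (a i2) := (hadj _ _).mpr (by rw [cycAdjVal h2n, hv1, hv2]; omega)
  have h23 : G.Adj (a i2) (a i3) := (hadj _ _).mpr (by rw [cycAdjVal h2n, hv2, hv3]; omega)
  have h02 : ¬ G.Adj (a i0) (a i2) := fun h => by
    rw [hadj, cycAdjVal h2n, hv0, hv2] at h; omega
  have h13 : ¬ G.Adj (a i1) (a i3) := fun h => by
    rw [hadj, cycAdjVal h2n, hv1, hv3] at h; omega
  -- all four in the same fiber
  have hf01 := ((hiff _ _).mp h01).1
  have hf12 := ((hiff _ _).mp h12).1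
  have hf23 := ((hiff _ _).mp h23).1
  have hc02 : c (a i0) = c (a i2) := by
    by_contra hcc
    exact h02 ((hiff _ _).mpr ⟨hf01.trans hf12, hcc⟩)
  have hc13 : c (a i1) = c (a i3) := by
    by_contra hcc
    exact h13 ((hiff _ _).mpr ⟨hf12.trans hf23, hcc⟩)
  rcases Nat.lt_or_ge n 5 with h5 | h5
  · -- n = 4 : two big parts
    have hn4 : n = 4 := by omega
    have hne02 : a i0 ≠ a i2 := fun h => by
      have := hainj h
      rw [Fin.ext_iff, hv0, hv2] at this
      omega
    have hne13 : a i1 ≠ a i3 := fun h => by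
      have := hainj h
      rw [Fin.ext_iff, hv1, hv3] at this
      omega
    have hbig1 : 1 < {x : V | f x = f (a i0) ∧ c x = c (a i0)}.ncard := by
      rw [Set.one_lt_ncard (Set.toFinite _)]
      exact ⟨a i0, ⟨rfl, rfl⟩, a i2, ⟨(hf01.trans hf12).symm, hc02.symm⟩, hne02⟩
    have hbig2 : 1 < {x : V | f x = f (a i0) ∧ c x = c (a i1)}.ncard := by
      rw [Set.one_lt_ncard (Set.toFinite _)]
      exact ⟨a i1, ⟨hf01.symm, rfl⟩, a i3, ⟨(hf12.trans hf23).symm.trans hf01.symm, hc13.symm⟩, hne13⟩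
    have := hbig (f (a i0)) (c (a i0)) (c (a i1)) hbig1 hbig2
    exact ((hiff _ _).mp h01).2 this
  · -- n ≥ 5 : direct contradiction
    have h03 : ¬ G.Adj (a i0) (a i3) := fun h => by
      rw [hadj, cycAdjVal h2n, hv0, hv3] at h; omega
    have hc03 : c (a i0) = c (a i3) := by
      by_contra hcc
      exact h03 ((hiff _ _).mpr ⟨hf01.trans (hf12.trans hf23), hcc⟩)
    exact ((hiff _ _).mp h23).2 (hc02.symm.trans hc03)

end BackwardAux
end Aux

section Main

variable {V : Type*} [Finite V] {G : SimpleGraph V} {k : ℕ}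

lemma forward_struct {M : ℕ} (huni : TotalKUniform G k) (hiso : NoIsolatedVerts G)
    (hch : IsChordal G) (e : G.ConnectedComponent ≃ Fin M) (ι : Set V → ℕ)
    (hι : Function.Injective ι) :
    ∀ u v : V, G.Adj u v ↔
      (e (G.connectedComponentMk u) = e (G.connectedComponentMk v) ∧
        ι {w | G.Adj u w} ≠ ι {w | G.Adj v w}) := by
  intro u v
  constructor
  · intro h
    refine ⟨congrArg e (ConnectedComponent.sound h.reachable), fun hc => ?_⟩
    have hNN : {w | G.Adj u w} = {w | G.Adj v w} := hι hc
    have hv : v ∈ {w | G.Adj u w} := h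
    rw [hNN] at hv
    exact G.irrefl hv
  · rintro ⟨hf, hc⟩
    have hcomp : G.connectedComponentMk u = G.connectedComponentMk v := e.injective hf
    by_contra hnadj
    have hne : u ≠ v := fun hEq => hc (by rw [hEq])
    have hsame := nonadj_same_nbhd huni hiso hch hcomp hne hnadj
    exact hc (congrArg ι (Set.ext fun w => hsame w))

end Main

/-- A graph without isolated vertices is a total `k`-uniform chordal graph iff it is the
disjoint union of `k/2` complete multipartite graphs, each having at least two parts and at
most one part of size greater than 1. -/
theorem stmt_18 {V : Type*} [Finite V] (G : SimpleGraph V) (k : ℕ) (hk : 0 < k)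
    (hiso : NoIsolatedVerts G) :
    (TotalKUniform G k ∧ IsChordal G) ↔
      ∃ m : ℕ, k = 2 * m ∧ DisjUnionCompMultipartiteOneBig G m := by
  classical
  constructor
  · rintro ⟨huni, hch⟩
    obtain ⟨ι, hι⟩ := exists_injective_nat (Set V)
    have e := Finite.equivFin G.ConnectedComponent
    have hiff := forward_struct huni hiso hch e ι hι
    refine ⟨Nat.card G.ConnectedComponent, forward_k_eq huni hiso hch,
      fun v => e (G.connectedComponentMk v), fun v => ι {w | G.Adj v w},
      fun u v => hiff u v, ?_, ?_⟩
    · intro i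
      obtain ⟨u, hu1, hu2⟩ := exists_comp_dominator huni hiso hch (e.symm i)
      obtain ⟨v, hv⟩ := hiso u
      refine ⟨u, v, ?_, ?_, ((hiff u v).mp hv).2⟩
      · show e (G.connectedComponentMk u) = i
        rw [hu1]
        exact e.apply_symm_apply i
      · show e (G.connectedComponentMk v) = i
        rw [← ConnectedComponent.sound hv.reachable, hu1]
        exact e.apply_symm_apply i
    · intro i j₁ j₂ h1 h2
      by_contra hne
      rw [Set.one_lt_ncard (Set.toFinite _)] at h1 h2
      obtain ⟨a, ha, a2, ha2, hnea⟩ := h1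
      obtain ⟨b, hb, b2, hb2, hneb⟩ := h2
      simp only [Set.mem_setOf_eq] at ha ha2 hb hb2
      have hadj : ∀ x y : V,
          e (G.connectedComponentMk x) = i → ι {w | G.Adj x w} = j₁ →
          e (G.connectedComponentMk y) = i → ι {w | G.Adj y w} = j₂ → G.Adj x y := by
        intro x y hx1 hx2 hy1 hy2
        exact (hiff x y).mpr ⟨hx1.trans hy1.symm, by rw [hx2, hy2]; exact hne⟩
      have hnadjp : ∀ x y : V,
          e (G.connectedComponentMk x) = e (G.connectedComponentMk y) →
          ι {w | G.Adj x w} = ι {w | G.Adj y w} → ¬ G.Adj x y := by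
        intro x y hx hy h
        exact ((hiff x y).mp h).2 hy
      exact c4_contra hch (hadj a b ha.1 ha.2 hb.1 hb.2)
        (hadj a2 b ha2.1 ha2.2 hb.1 hb.2).symm
        (hadj a2 b2 ha2.1 ha2.2 hb2.1 hb2.2)
        (hadj a b2 ha.1 ha.2 hb2.1 hb2.2).symm
        (hnadjp a a2 (ha.1.trans ha2.1.symm) (by rw [ha.2, ha2.2]))
        (hnadjp b b2 (hb.1.trans hb2.1.symm) (by rw [hb.2, hb2.2]))
        hnea hneb
  · rintro ⟨m, rfl, f, c, hiff, hpart2, hbig⟩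
    obtain ⟨s, hs, hlen, hcov⟩ := backward_seq hiff hpart2
    have htds : TotalDomSeq G s := ⟨hs, fun z => by
      obtain ⟨a, ha, hadj⟩ := mem_cov.mp (hcov z)
      exact ⟨a, ha, hadj.symm⟩⟩
    refine ⟨⟨?_, ?_⟩, backward_chordal hiff hbig⟩
    · apply le_antisymm
      · exact Nat.sInf_le ⟨{y | y ∈ s}, htds.2, by rw [ncard_mem_list hs.1, hlen]⟩
      · have hnemp : {n | ∃ A : Set V, TotalDomSet G A ∧ A.ncard = n}.Nonempty :=
          ⟨2 * m, {y | y ∈ s}, htds.2, by rw [ncard_mem_list hs.1, hlen]⟩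
        apply le_csInf hnemp
        rintro n ⟨A, hA, rfl⟩
        exact totdom_ge hiff hpart2 hA
    · apply le_antisymm
      · have hnemp : {n | ∃ s' : List V, TotalDomSeq G s' ∧ s'.length = n}.Nonempty :=
          ⟨2 * m, s, htds, hlen⟩
        apply csSup_le hnemp
        rintro n ⟨s', hts', rfl⟩
        exact legal_length_le_two_mul hiff hts'.1
      · exact le_csSup ⟨2 * m, fun n hn => by
          obtain ⟨s', hts', rfl⟩ := hn
          exact legal_length_le_two_mul hiff hts'.1⟩ ⟨s, htds, hlen⟩
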